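/- Let γ ∈ [0,1]. For every pair (ρ₀, ρ₁) of qubit density matrices and every two-outcome POVM (Λ₀, Λ₁) on ℂ², the average success probability satisfies (1/2)·Re Tr(Λ₀ · N_γ(ρ₀)) + (1/2)·Re Tr(Λ₁ · N_γ(ρ₁)) ≤ (1 + √(1−γ))/2. -/

import Mathlib

open Matrix Complex
open scoped ComplexOrder

/-- Kraus operator `K₀` of the qubit amplitude damping channel. -/
noncomputable def K₀ (γ : ℝ) : Matrix (Fin 2) (Fin 2) ℂ :=
  !![1, 0; 0, (Real.sqrt (1 - γ) : ℂ)]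

/-- Kraus operator `K₁` of the qubit amplitude damping channel. -/
noncomputable def K₁ (γ : ℝ) : Matrix (Fin 2) (Fin 2) ℂ :=
  !![0, (Real.sqrt γ : ℂ); 0, 0]

/-- The qubit amplitude damping channel with damping parameter `γ`. -/
noncomputable def ADC (γ : ℝ) (ρ : Matrix (Fin 2) (Fin 2) ℂ) : Matrix (Fin 2) (Fin 2) ℂ :=
  K₀ γ * ρ * (K₀ γ)ᴴ + K₁ γ * ρ * (K₁ γ)ᴴ

/-- The state `ρ₊ = |+⟩⟨+|`. -/
noncomputable def ρPlus : Matrix (Fin 2) (Fin 2) ℂ := (1/2 : ℂ) • !![1, 1; 1, 1]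

/-- The state `ρ₋ = |−⟩⟨−|`. -/
noncomputable def ρMinus : Matrix (Fin 2) (Fin 2) ℂ := (1/2 : ℂ) • !![1, -1; -1, 1]

section Aux

lemma aux_psd_diag_im {M : Matrix (Fin 2) (Fin 2) ℂ} (h : M.PosSemidef) (i : Fin 2) :
    (M i i).im = 0 := by
  have := h.dotProduct_mulVec_nonneg (Pi.single i 1)
  simp [dotProduct, Matrix.mulVec, Pi.single_apply] at this
  exact ((Complex.le_def.mp this).2).symm

lemma aux_psd_diag_re {M : Matrix (Fin 2) (Fin 2) ℂ} (h : M.PosSemidef) (i : Fin 2) :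
    0 ≤ (M i i).re := by
  have := h.dotProduct_mulVec_nonneg (Pi.single i 1)
  simp [dotProduct, Matrix.mulVec, Pi.single_apply] at this
  exact (Complex.le_def.mp this).1

lemma aux_psd_offdiag {M : Matrix (Fin 2) (Fin 2) ℂ} (h : M.PosSemidef) :
    M 1 0 = starRingEnd ℂ (M 0 1) := by
  have := h.1
  rw [Matrix.IsHermitian] at this
  conv_lhs => rw [← this]
  simp [Matrix.conjTranspose_apply]

lemma aux_psd_det {M : Matrix (Fin 2) (Fin 2) ℂ} (h : M.PosSemidef) :
    (M 0 1).re ^ 2 + (M 0 1).im ^ 2 ≤ (M 0 0).re * (M 1 1).re := by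
  have h10 := aux_psd_offdiag h
  have h00 := aux_psd_diag_im h 0
  have h11 := aux_psd_diag_im h 1
  obtain ⟨B, hB⟩ : ∃ B : Matrix (Fin 2) (Fin 2) ℂ, M = Bᴴ * B := by
    open scoped MatrixOrder in
    obtain ⟨B, hB⟩ := CStarAlgebra.nonneg_iff_eq_star_mul_self.mp h.nonneg
    exact ⟨B, hB⟩
  have hdet : M.det = star B.det * B.det := by
    rw [hB, Matrix.det_mul, Matrix.det_conjTranspose]
  have hre : 0 ≤ (M.det).re := by
    rw [hdet]; simp [Complex.mul_re]; nlinarith [sq_nonneg (B.det.re), sq_nonneg (B.det.im)]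
  rw [Matrix.det_fin_two, h10] at hre
  simp [Complex.sub_re, Complex.mul_re, Complex.conj_re, Complex.conj_im, h00, h11] at hre
  nlinarith [hre]

lemma aux_trace_formula (γ : ℝ) (hγ0 : 0 ≤ γ) (hγ1 : γ ≤ 1) (Λ ρ : Matrix (Fin 2) (Fin 2) ℂ) :
    (Λ * ADC γ ρ).trace = Λ 0 0 * (ρ 0 0 + (γ:ℂ) * ρ 1 1)
      + (Real.sqrt (1-γ) : ℂ) * (Λ 0 1 * ρ 1 0 + Λ 1 0 * ρ 0 1)
      + ((1:ℂ)-γ) * (Λ 1 1 * ρ 1 1) := by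
  have h1 : (Real.sqrt (1-γ) : ℂ) * (Real.sqrt (1-γ) : ℂ) = ((1:ℂ)-γ) := by
    rw [← Complex.ofReal_mul, Real.mul_self_sqrt (by linarith)]; push_cast; ring
  have h2 : (Real.sqrt γ : ℂ) * (Real.sqrt γ : ℂ) = (γ:ℂ) := by
    rw [← Complex.ofReal_mul, Real.mul_self_sqrt hγ0]
  simp [ADC, K₀, K₁, Matrix.trace_fin_two, Matrix.mul_apply, Fin.sum_univ_two,
    Matrix.conjTranspose_apply, Matrix.vecMul, dotProduct]
  ring_nf
  rw [show ((Real.sqrt (1-γ):ℂ))^2 = (1:ℂ)-γ by rw [sq]; exact h1,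
      show ((Real.sqrt γ:ℂ))^2 = (γ:ℂ) by rw [sq]; exact h2]
  ring

lemma aux_delta_c (p q cr ci : ℝ) (hp0 : 0 ≤ p) (hp1 : p ≤ 1) (hq0 : 0 ≤ q) (hq1 : q ≤ 1)
    (hc0 : cr^2 + ci^2 ≤ p*q) (hc1 : cr^2 + ci^2 ≤ (1-p)*(1-q)) :
    (p-q)^2 + 4*(cr^2+ci^2) ≤ 1 := by
  rcases le_total (p+q) 1 with h | h
  · nlinarith [sq_nonneg (p+q)]
  · nlinarith [sq_nonneg (2-p-q)]

lemma aux_diff_bound (a0 a1 b0r b0i b1r b1i : ℝ)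
    (ha0 : 0 ≤ a0) (ha0' : a0 ≤ 1) (ha1 : 0 ≤ a1) (ha1' : a1 ≤ 1)
    (hb0 : b0r^2 + b0i^2 ≤ a0*(1-a0)) (hb1 : b1r^2 + b1i^2 ≤ a1*(1-a1)) :
    (a0-a1)^2 + (b0r-b1r)^2 + (b0i-b1i)^2 ≤ 1 := by
  have hP : (b0r*b1r + b0i*b1i)^2 ≤ (b0r^2+b0i^2)*(b1r^2+b1i^2) := by
    nlinarith [sq_nonneg (b0r*b1i - b0i*b1r)]
  have hAB : (b0r^2+b0i^2)*(b1r^2+b1i^2) ≤ (a0*a1)*((1-a0)*(1-a1)) := by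
    have := mul_le_mul hb0 hb1 (by positivity) (by nlinarith)
    nlinarith [this]
  have key : a0*a1 + (1-a0)*(1-a1) + 2*(b0r*b1r + b0i*b1i) ≥ 0 := by
    nlinarith [sq_nonneg (a0*a1 - (1-a0)*(1-a1)), sq_nonneg (a0*a1 + (1-a0)*(1-a1)),
      mul_nonneg (mul_nonneg ha0 ha1) (mul_nonneg (by linarith : (0:ℝ) ≤ 1-a0) (by linarith : (0:ℝ) ≤ 1-a1))]
  nlinarith [key, hb0, hb1]

lemma aux_core (s u vr vi p q cr ci : ℝ) (hs0 : 0 ≤ s) (hs1 : s ≤ 1)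
    (hδc : (p-q)^2 + 4*(cr^2+ci^2) ≤ 1) (huv : u^2 + vr^2 + vi^2 ≤ 1) :
    s^2*u*(p-q) + 2*s*(cr*vr + ci*vi) ≤ s := by
  have hinner : s*u*(p-q) + 2*(cr*vr + ci*vi) ≤ 1 := by
    nlinarith [sq_nonneg (s*u - (p-q)), sq_nonneg (2*cr - vr), sq_nonneg (2*ci - vi),
      mul_nonneg (by nlinarith : (0:ℝ) ≤ 1 - s^2) (sq_nonneg u)]
  calc s^2*u*(p-q) + 2*s*(cr*vr + ci*vi) = s * (s*u*(p-q) + 2*(cr*vr + ci*vi)) := by ring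
    _ ≤ s * 1 := mul_le_mul_of_nonneg_left hinner hs0
    _ = s := by ring

end Aux

set_option maxHeartbeats 2000000 in
/-- For `γ ∈ [0,1]`, every pair of qubit density matrices and every two-outcome
POVM on `ℂ²` has average success probability at most `(1 + √(1−γ))/2` over the ADC. -/
theorem stmt1 (γ : ℝ) (hγ0 : 0 ≤ γ) (hγ1 : γ ≤ 1)
    (ρ₀ ρ₁ Λ₀ Λ₁ : Matrix (Fin 2) (Fin 2) ℂ)
    (hρ₀ : ρ₀.PosSemidef) (hρ₀t : ρ₀.trace = 1)
    (hρ₁ : ρ₁.PosSemidef) (hρ₁t : ρ₁.trace = 1)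
    (hΛ₀ : Λ₀.PosSemidef) (hΛ₁ : Λ₁.PosSemidef) (hΛ : Λ₀ + Λ₁ = 1) :
    (1/2) * (Λ₀ * ADC γ ρ₀).trace.re + (1/2) * (Λ₁ * ADC γ ρ₁).trace.re
      ≤ (1 + Real.sqrt (1 - γ)) / 2 := by
  set s := Real.sqrt (1 - γ) with hs_def
  have hs2 : s^2 = 1 - γ := Real.sq_sqrt (by linarith)
  have hs0 : 0 ≤ s := Real.sqrt_nonneg _
  have hs1 : s ≤ 1 := by
    rw [show (1:ℝ) = Real.sqrt 1 by simp [Real.sqrt_one]]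
    exact Real.sqrt_le_sqrt (by linarith)
  -- entry notations
  set p := (Λ₀ 0 0).re with hp_def
  set q := (Λ₀ 1 1).re with hq_def
  set cr := (Λ₀ 0 1).re with hcr_def
  set ci := (Λ₀ 0 1).im with hci_def
  set a0 := (ρ₀ 0 0).re with ha0_def
  set b0r := (ρ₀ 0 1).re with hb0r_def
  set b0i := (ρ₀ 0 1).im with hb0i_def
  set a1 := (ρ₁ 0 0).re with ha1_def
  set b1r := (ρ₁ 0 1).re with hb1r_def
  set b1i := (ρ₁ 0 1).im with hb1i_def
  -- Λ₁ entries
  have hΛ₁e : ∀ i j, Λ₁ i j = (1 : Matrix (Fin 2) (Fin 2) ℂ) i j - Λ₀ i j := by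
    intro i j
    have := congrFun (congrFun hΛ i) j
    simp [Matrix.add_apply] at this
    linear_combination this
  -- trace facts
  have htr0 : (ρ₀ 1 1).re = 1 - a0 := by
    have := congrArg Complex.re hρ₀t
    rw [Matrix.trace_fin_two] at this
    simp [Complex.add_re] at this
    linarith
  have htr1 : (ρ₁ 1 1).re = 1 - a1 := by
    have := congrArg Complex.re hρ₁t
    rw [Matrix.trace_fin_two] at this
    simp [Complex.add_re] at this
    linarith
  -- PSD scalar facts
  have hp0 : 0 ≤ p := aux_psd_diag_re hΛ₀ 0
  have hq0 : 0 ≤ q := aux_psd_diag_re hΛ₀ 1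
  have hp1 : p ≤ 1 := by
    have := aux_psd_diag_re hΛ₁ 0
    rw [hΛ₁e 0 0] at this
    simp [Matrix.one_apply, Complex.sub_re] at this
    linarith
  have hq1 : q ≤ 1 := by
    have := aux_psd_diag_re hΛ₁ 1
    rw [hΛ₁e 1 1] at this
    simp [Matrix.one_apply, Complex.sub_re] at this
    linarith
  have hc0 : cr^2 + ci^2 ≤ p*q := aux_psd_det hΛ₀
  have hc1 : cr^2 + ci^2 ≤ (1-p)*(1-q) := by
    have := aux_psd_det hΛ₁
    rw [hΛ₁e 0 1, hΛ₁e 0 0, hΛ₁e 1 1] at this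
    simp [Matrix.one_apply, Complex.sub_re, Complex.sub_im] at this
    nlinarith [this]
  have ha00 : 0 ≤ a0 := aux_psd_diag_re hρ₀ 0
  have ha01 : a0 ≤ 1 := by have := aux_psd_diag_re hρ₀ 1; linarith [htr0 ▸ this]
  have ha10 : 0 ≤ a1 := aux_psd_diag_re hρ₁ 0
  have ha11 : a1 ≤ 1 := by have := aux_psd_diag_re hρ₁ 1; linarith [htr1 ▸ this]
  have hb0 : b0r^2 + b0i^2 ≤ a0*(1-a0) := by
    have := aux_psd_det hρ₀; rw [htr0] at this; exact this
  have hb1 : b1r^2 + b1i^2 ≤ a1*(1-a1) := by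
    have := aux_psd_det hρ₁; rw [htr1] at this; exact this
  -- core inequality
  have hcore := aux_core s (a0-a1) (b0r-b1r) (b0i-b1i) p q cr ci hs0 hs1
    (aux_delta_c p q cr ci hp0 hp1 hq0 hq1 hc0 hc1)
    (aux_diff_bound a0 a1 b0r b0i b1r b1i ha00 ha01 ha10 ha11 hb0 hb1)
  -- rewrite traces
  rw [aux_trace_formula γ hγ0 hγ1 Λ₀ ρ₀, aux_trace_formula γ hγ0 hγ1 Λ₁ ρ₁]
  rw [aux_psd_offdiag hρ₀, aux_psd_offdiag hρ₁, hΛ₁e 0 0, hΛ₁e 0 1, hΛ₁e 1 0, hΛ₁e 1 1]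
  have him00 := aux_psd_diag_im hΛ₀ 0
  have him01 := aux_psd_diag_im hΛ₀ 1
  have himρ0 := aux_psd_diag_im hρ₀ 0
  have himρ0' := aux_psd_diag_im hρ₀ 1
  have himρ1 := aux_psd_diag_im hρ₁ 0
  have himρ1' := aux_psd_diag_im hρ₁ 1
  have h10 : Λ₀ 1 0 = starRingEnd ℂ (Λ₀ 0 1) := aux_psd_offdiag hΛ₀
  rw [h10]
  have hγeq : γ = 1 - s^2 := by linarith
  simp only [Matrix.one_apply, if_true, if_neg (by decide : (0:Fin 2) ≠ 1),
    if_neg (by decide : (1:Fin 2) ≠ 0), eq_self_iff_true]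
  simp only [Complex.add_re, Complex.sub_re, Complex.mul_re, Complex.add_im, Complex.sub_im,
    Complex.mul_im, Complex.ofReal_re, Complex.ofReal_im, Complex.one_re, Complex.one_im,
    Complex.zero_re, Complex.zero_im, Complex.conj_re, Complex.conj_im,
    him00, him01, himρ0, himρ0', himρ1, himρ1', htr0, htr1]
  rw [hγeq]
  ring_nf
  rw [show Real.sqrt (s^2) = s from Real.sqrt_sq hs0]
  ring_nf at hcore
  nlinarith [hcore]
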